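/- arXiv:1403.2774 — 4 statements merged into one kernel-verified Lean document; each statement's English description precedes it below -/
import Mathlib

section
/- Let G = ℤ * ℤ/2ℤ be the free product with A generating the ℤ factor and V generating the ℤ/2ℤ factor (so V^2 = 1). If φ is an automorphism of G with φ(A) = A, then there exists an integer n such that φ(V) = A^n V A^{-n}. -/
open Monoid

namespace Stmt9Aux

abbrev C2 := Multiplicative (ZMod 2)

abbrev K := Monoid.CoprodI (fun _ : ℤ => C2)

def xx : C2 := Multiplicative.ofAdd 1

lemma xx_ne_one : xx ≠ 1 := by decide

lemma xx_mul_xx : xx * xx = 1 := by decide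

lemma c2_cases (a : C2) : a = 1 ∨ a = xx := by revert a; decide

def E (m : ℤ) : K := CoprodI.of (i := m) xx

lemma E_mul_self (m : ℤ) : E m * E m = 1 := by
  rw [E, ← map_mul, xx_mul_xx, map_one]

lemma E_ne_one (m : ℤ) : E m ≠ 1 := fun h =>
  xx_ne_one (CoprodI.of_injective m (h.trans (map_one (CoprodI.of (i := m))).symm))

/-- monoid hom from `C2` determined by an involution -/
def involHom {H : Type*} [Monoid H] (h : H) (hh : h * h = 1) : C2 →* H where
  toFun z := h ^ (Multiplicative.toAdd z).val
  map_one' := by simp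
  map_mul' a b := by
    have h2 : h ^ 2 = 1 := by rw [pow_two]; exact hh
    have hpow : ∀ n : ℕ, h ^ n = h ^ (n % 2) := fun n => by
      conv_lhs => rw [← Nat.div_add_mod n 2]
      rw [pow_add, pow_mul, h2, one_pow, one_mul]
    show h ^ (Multiplicative.toAdd (a * b)).val = _
    rw [toAdd_mul, ZMod.val_add, ← hpow, pow_add]

lemma involHom_xx {H : Type*} [Monoid H] (h : H) (hh : h * h = 1) :
    involHom h hh xx = h := by
  show h ^ (Multiplicative.toAdd xx).val = h
  have : (Multiplicative.toAdd xx).val = 1 := rfl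
  rw [this, pow_one]

lemma c2_hom_ext {H : Type*} [Monoid H] {f g : C2 →* H} (h : f xx = g xx) : f = g := by
  refine MonoidHom.ext fun a => ?_
  rcases c2_cases a with rfl | rfl
  · simp
  · exact h

lemma khom_ext {H : Type*} [Monoid H] {f g : K →* H} (h : ∀ m, f (E m) = g (E m)) : f = g := by
  apply CoprodI.ext_hom
  intro i
  exact c2_hom_ext (h i)

/-- shift by `d` -/
def sh (d : ℤ) : K →* K := CoprodI.lift (fun i => (@CoprodI.of ℤ (fun _ : ℤ => C2) _ (i + d)))

lemma sh_E (d m : ℤ) : sh d (E m) = E (m + d) := by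
  rw [E, sh, CoprodI.lift_of]; rfl

def shEquiv (d : ℤ) : K ≃* K :=
  MonoidHom.toMulEquiv (sh d) (sh (-d))
    (khom_ext fun m => by simp [sh_E])
    (khom_ext fun m => by simp [sh_E])

def τ : Multiplicative ℤ →* MulAut K where
  toFun z := shEquiv z.toAdd
  map_one' := MulEquiv.ext fun y => by
    have : sh 0 = MonoidHom.id K := khom_ext fun m => by simp [sh_E]
    exact DFunLike.congr_fun this y
  map_mul' a b := MulEquiv.ext fun y => by
    have : sh (Multiplicative.toAdd (a * b)) =
        (sh (Multiplicative.toAdd a)).comp (sh (Multiplicative.toAdd b)) :=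
      khom_ext fun m => by simp [sh_E]; ring_nf
    exact DFunLike.congr_fun this y

lemma τ_E (z : Multiplicative ℤ) (m : ℤ) : τ z (E m) = E (m + Multiplicative.toAdd z) :=
  sh_E _ _


/-! ### Words as lists of integers -/

open CoprodI in
/-- product of generators given by a list of indices -/
def wal (l : List ℤ) : K := (l.map E).prod

lemma wal_nil : wal [] = 1 := rfl

lemma wal_append (l₁ l₂ : List ℤ) : wal (l₁ ++ l₂) = wal l₁ * wal l₂ := by
  simp [wal, List.map_append, List.prod_append]

lemma wal_cons (a : ℤ) (l : List ℤ) : wal (a :: l) = E a * wal l := by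
  simp [wal]

lemma wal_singleton (a : ℤ) : wal [a] = E a := by simp [wal]

/-- the reduced `Word` attached to a chain of indices -/
def word (l : List ℤ) (hl : l.Chain' (· ≠ ·)) : CoprodI.Word (fun _ : ℤ => C2) where
  toList := l.map fun i => ⟨i, xx⟩
  ne_one := by
    intro a ha
    simp only [List.mem_map] at ha
    obtain ⟨i, _, rfl⟩ := ha
    exact xx_ne_one
  chain_ne := by
    rw [List.isChain_map]
    exact hl

lemma word_prod (l : List ℤ) (hl : l.Chain' (· ≠ ·)) : (word l hl).prod = wal l := by
  unfold CoprodI.Word.prod word wal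
  rw [List.map_map]
  rfl

lemma exists_list (g : K) : ∃ l : List ℤ, l.Chain' (· ≠ ·) ∧ g = wal l := by
  set w := CoprodI.Word.equiv (M := fun _ : ℤ => C2) g with hw
  refine ⟨w.toList.map Sigma.fst, ?_, ?_⟩
  · show List.IsChain _ _
    rw [List.isChain_map]
    exact w.chain_ne
  · have hg : w.prod = g := CoprodI.Word.equiv.left_inv g
    rw [← hg]
    unfold CoprodI.Word.prod wal
    rw [List.map_map]
    refine congrArg List.prod (List.map_congr_left fun a ha => ?_)
    rcases c2_cases a.snd with h1 | h1
    · exact absurd h1 (w.ne_one a ha)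
    · simp only [Function.comp_apply, E]
      exact congrArg _ h1

lemma wal_injOn {l l' : List ℤ} (hl : l.Chain' (· ≠ ·)) (hl' : l'.Chain' (· ≠ ·))
    (h : wal l = wal l') : l = l' := by
  have hprod : (word l hl).prod = (word l' hl').prod := by
    rw [word_prod, word_prod, h]
  have hword : word l hl = word l' hl' := by
    have h1 := CoprodI.Word.equiv.right_inv (word l hl)
    have h2 := CoprodI.Word.equiv.right_inv (word l' hl')
    calc word l hl = CoprodI.Word.equiv (word l hl).prod := h1.symm
    _ = CoprodI.Word.equiv (word l' hl').prod := by rw [hprod]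
    _ = word l' hl' := h2
  have hinj : Function.Injective (fun i : ℤ => (⟨i, xx⟩ : Σ _ : ℤ, C2)) :=
    fun a b h => congrArg Sigma.fst h
  exact (List.map_injective_iff.2 hinj) (congrArg CoprodI.Word.toList hword)

lemma wal_eq_one {l : List ℤ} (hl : l.Chain' (· ≠ ·)) (h : wal l = 1) : l = [] :=
  wal_injOn hl List.isChain_nil (h.trans wal_nil.symm)

lemma wal_eq_E {l : List ℤ} (hl : l.Chain' (· ≠ ·)) {n : ℤ} (h : wal l = E n) : l = [n] :=
  wal_injOn hl (List.isChain_singleton n) (h.trans (wal_singleton n).symm)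


/-- an involution's reduced word is a palindrome of odd length -/
lemma palindrome : ∀ (N : ℕ) (l : List ℤ), l.length ≤ N → l.Chain' (· ≠ ·) →
    wal l * wal l = 1 → l = [] ∨ ∃ c n, l = c ++ n :: c.reverse := by
  intro N
  induction N with
  | zero =>
    intro l hlen _ _
    left
    exact List.length_eq_zero_iff.mp (Nat.le_zero.mp hlen)
  | succ N ih =>
    intro l hlen hl hsq
    rcases l with _ | ⟨a, t⟩
    · exact Or.inl rfl
    rcases eq_or_ne t [] with rfl | ht
    · exact Or.inr ⟨[], a, rfl⟩
    -- l = a :: t, t ≠ []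
    right
    obtain ⟨b, hb⟩ : ∃ b, b ∈ t.getLast? := by
      cases h : t.getLast? with
      | none => exact absurd (List.getLast?_eq_none_iff.mp h) ht
      | some b => exact ⟨b, by rw [Option.mem_def]⟩
    have hlast : (a :: t).getLast? = some b := List.mem_getLast?_cons hb
    by_cases hab : a = b
    case neg =>
      -- no cancellation: l ++ l is a nonempty chain with trivial product
      exfalso
      have hchain : ((a :: t) ++ (a :: t)).Chain' (· ≠ ·) := by
        show List.IsChain _ _
        rw [List.isChain_append]
        refine ⟨hl, hl, ?_⟩
        intro x hx y hy
        rw [hlast, Option.mem_def, Option.some.injEq] at hx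
        subst hx
        simp only [List.head?_cons, Option.mem_def, Option.some.injEq] at hy
        subst hy
        exact fun h => hab h.symm
      have : (a :: t) ++ (a :: t) = [] := wal_eq_one hchain (by rw [wal_append]; exact hsq)
      simp at this
    case pos =>
      subst hab
      -- write t = t' ++ [a]
      obtain ⟨t', rfl⟩ : ∃ t', t = t' ++ [a] := by
        refine ⟨t.dropLast, ?_⟩
        have := List.dropLast_append_getLast? a hb
        exact this.symm
      -- inner word
      have hchain_t' : t'.Chain' (· ≠ ·) := by
        have h1 : (t' ++ [a]).Chain' (· ≠ ·) := hl.tail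
        exact h1.prefix ⟨[a], rfl⟩
      have hne : t' ≠ [] := by
        rintro rfl
        simp only [List.nil_append] at hl
        exact (List.isChain_cons_cons.mp hl).1 rfl
      have hsq' : wal t' * wal t' = 1 := by
        have hinv : (E a)⁻¹ = E a := inv_eq_of_mul_eq_one_right (E_mul_self a)
        have expand : wal (a :: (t' ++ [a])) = E a * wal t' * (E a)⁻¹ := by
          rw [wal_cons, wal_append, wal_singleton, mul_assoc, hinv]
        have key : E a * (wal t' * wal t') * (E a)⁻¹ = 1 := by
          have hgp : (E a * wal t' * (E a)⁻¹) * (E a * wal t' * (E a)⁻¹) =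
              E a * (wal t' * wal t') * (E a)⁻¹ := by group
          rw [← hgp, ← expand]
          exact hsq
        calc wal t' * wal t'
            = (E a)⁻¹ * (E a * (wal t' * wal t') * (E a)⁻¹) * E a := by group
          _ = (E a)⁻¹ * 1 * E a := by rw [key]
          _ = 1 := by group
      have hlen' : t'.length ≤ N := by
        simp only [List.length_cons, List.length_append, List.length_singleton] at hlen ⊢
        omega
      rcases ih t' hlen' hchain_t' hsq' with rfl | ⟨c, n, rfl⟩
      · exact absurd rfl hne
      · refine ⟨a :: c, n, ?_⟩
        simp [List.append_assoc]


lemma τ_wal (z : Multiplicative ℤ) (l : List ℤ) :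
    τ z (wal l) = wal (l.map (· + Multiplicative.toAdd z)) := by
  induction l with
  | nil => simp [wal_nil]
  | cons a l ih => rw [List.map_cons, wal_cons, wal_cons, map_mul, τ_E, ih]

lemma chain'_flatMap (lk : List ℤ) (hlk : lk.Chain' (· ≠ ·)) (hne : lk ≠ [])
    (hhl : lk.head? = lk.getLast?) :
    ∀ ms : List ℤ, ms.Chain' (· ≠ ·) →
      (ms.flatMap fun m => lk.map (· + m)).Chain' (· ≠ ·) := by
  intro ms
  induction ms with
  | nil => intro _; exact List.isChain_nil
  | cons m ms ih =>
    intro hms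
    show List.IsChain _ _
    rw [List.flatMap_cons, List.isChain_append]
    refine ⟨?_, ih hms.tail, ?_⟩
    · rw [List.isChain_map]
      exact hlk.imp fun h => by omega
    · intro x hx y hy
      cases ms with
      | nil => simp at hy
      | cons m' ms' =>
        -- y is the head of the next block
        rw [List.flatMap_cons] at hy
        have hlk_ne : lk.map (· + m') ≠ [] := by simpa using hne
        rw [List.head?_append] at hy
        obtain ⟨hd, hhd⟩ : ∃ hd, lk.head? = some hd := by
          cases h : lk.head? with
          | none => exact absurd (List.head?_eq_none_iff.mp h) hne
          | some hd => exact ⟨hd, rfl⟩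
        rw [List.head?_map, hhd] at hy
        rw [List.getLast?_map, ← hhl, hhd] at hx
        simp only [Option.map_some, Option.or_some, Option.some_or, Option.mem_def,
          Option.some.injEq] at hx hy
        have hmm' : m ≠ m' := (List.isChain_cons_cons.mp hms).1
        omega

lemma pal_head_last (c : List ℤ) (n : ℤ) :
    (c ++ n :: c.reverse).head? = (c ++ n :: c.reverse).getLast? := by
  cases c with
  | nil => simp
  | cons a t =>
    rw [List.getLast?_append, List.head?_append]
    have h1 : (n :: (a :: t).reverse).getLast? = some a := by
      rw [List.getLast?_cons, List.getLast?_reverse]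
      simp
    rw [h1]
    simp

lemma Φ_wal (Φ : K →* K) (lk : List ℤ)
    (hΦ : ∀ m : ℤ, Φ (E m) = τ (Multiplicative.ofAdd m) (wal lk)) :
    ∀ ms : List ℤ, Φ (wal ms) = wal (ms.flatMap fun m => lk.map (· + m)) := by
  intro ms
  induction ms with
  | nil => simp [wal_nil]
  | cons m ms ih =>
    rw [wal_cons, map_mul, hΦ, List.flatMap_cons, wal_append, ih, τ_wal]
    rfl

lemma core (k : K) (hk : k * k = 1) (hkne : k ≠ 1) (y : K) (hy : y ≠ 1)
    (Φ : K →* K) (hΦ : ∀ m : ℤ, Φ (E m) = τ (Multiplicative.ofAdd m) k)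
    (h : Φ y = E 0) : ∃ n, k = E n := by
  obtain ⟨lk, hlk, rfl⟩ := exists_list k
  obtain ⟨ly, hly, rfl⟩ := exists_list y
  have hΦwal := Φ_wal Φ lk hΦ ly
  rcases palindrome lk.length lk le_rfl hlk hk with rfl | ⟨c, n, rfl⟩
  · exact absurd wal_nil hkne
  · have hlkne : (c ++ n :: c.reverse) ≠ [] := by simp
    have hchainL : (ly.flatMap fun m => (c ++ n :: c.reverse).map (· + m)).Chain' (· ≠ ·) :=
      chain'_flatMap _ hlk hlkne (pal_head_last c n) ly hly
    have hL : (ly.flatMap fun m => (c ++ n :: c.reverse).map (· + m)) = [0] := by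
      apply wal_eq_E hchainL
      rw [← hΦwal, h]
    have hcount := congrArg List.length hL
    have hlyne : ly ≠ [] := fun hnil => hy (by rw [hnil, wal_nil])
    have hc0 : c = [] := by
      cases ly with
      | nil => exact absurd rfl hlyne
      | cons m0 ms =>
        rw [List.flatMap_cons, List.length_append, List.length_singleton] at hcount
        have h1 : ((c ++ n :: c.reverse).map (· + m0)).length = 2 * c.length + 1 := by
          simp only [List.length_map, List.length_append, List.length_cons,
            List.length_reverse]
          omega
        have : c.length = 0 := by omega
        exact List.length_eq_zero_iff.mp this
    subst hc0
    exact ⟨n, by simp [wal_singleton]⟩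


/-! ### The group `G = ℤ ∗ ℤ/2` and the isomorphism with `K ⋊ ℤ` -/

abbrev GG := Monoid.Coprod (Multiplicative ℤ) C2

def Agen : GG := Coprod.inl (Multiplicative.ofAdd 1)

def Vgen : GG := Coprod.inr xx

lemma Vgen_sq : Vgen * Vgen = 1 := by
  rw [Vgen, ← map_mul, xx_mul_xx, map_one]

def conjV (m : ℤ) : GG := Agen ^ m * Vgen * Agen ^ (-m)

lemma conjV_sq (m : ℤ) : conjV m * conjV m = 1 := by
  have h : Agen ^ (-m) * Agen ^ m = 1 := by group
  calc conjV m * conjV m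
      = Agen ^ m * Vgen * (Agen ^ (-m) * Agen ^ m) * Vgen * Agen ^ (-m) := by
        rw [conjV]; group
    _ = Agen ^ m * (Vgen * Vgen) * Agen ^ (-m) := by rw [h]; group
    _ = 1 := by rw [Vgen_sq]; group

abbrev S := SemidirectProduct K (Multiplicative ℤ) τ

def ΞK : K →* GG := CoprodI.lift (fun m => involHom (conjV m) (conjV_sq m))

lemma ΞK_E (m : ℤ) : ΞK (E m) = conjV m := by
  rw [E, ΞK, CoprodI.lift_of, involHom_xx]

lemma Ξcompat : ∀ z : Multiplicative ℤ,
    ΞK.comp (τ z).toMonoidHom =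
      (MulAut.conj (zpowersHom GG Agen z)).toMonoidHom.comp ΞK := by
  intro z
  apply khom_ext
  intro m
  show ΞK (τ z (E m)) = MulAut.conj (zpowersHom GG Agen z) (ΞK (E m))
  rw [τ_E, ΞK_E, ΞK_E, MulAut.conj_apply, zpowersHom_apply, conjV, conjV]
  group

def Ξ : S →* GG := SemidirectProduct.lift ΞK (zpowersHom GG Agen) Ξcompat

def Θ : GG →* S :=
  Coprod.lift SemidirectProduct.inr
    (involHom (SemidirectProduct.inl (E 0))
      (by rw [← map_mul, E_mul_self, map_one]))

lemma Θ_A : Θ Agen = SemidirectProduct.inr (Multiplicative.ofAdd 1) := by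
  rw [Agen, Θ, Coprod.lift_apply_inl]

lemma Θ_V : Θ Vgen = SemidirectProduct.inl (E 0) := by
  rw [Vgen, Θ, Coprod.lift_apply_inr, involHom_xx]

lemma Θ_Apow (m : ℤ) : Θ (Agen ^ m) = SemidirectProduct.inr (Multiplicative.ofAdd m) := by
  rw [map_zpow, Θ_A, ← map_zpow]
  congr 1
  rw [← ofAdd_zsmul]
  norm_num

lemma Θ_conjV (m : ℤ) : Θ (conjV m) = SemidirectProduct.inl (E m) := by
  rw [conjV, map_mul, map_mul, Θ_Apow, Θ_Apow, Θ_V]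
  have h2 : Multiplicative.ofAdd (-m) = (Multiplicative.ofAdd m)⁻¹ := by norm_num
  rw [h2, ← SemidirectProduct.inl_aut, τ_E]
  norm_num

lemma Ξ_Θ : Ξ.comp Θ = MonoidHom.id GG := by
  apply Coprod.hom_ext
  · apply MonoidHom.ext_mint
    show Ξ (Θ Agen) = Agen
    rw [Θ_A, Ξ, SemidirectProduct.lift_inr, zpowersHom_apply]
    norm_num
  · apply c2_hom_ext
    show Ξ (Θ Vgen) = Vgen
    rw [Θ_V, Ξ, SemidirectProduct.lift_inl, ΞK_E, conjV]
    group

lemma Θ_Ξ : Θ.comp Ξ = MonoidHom.id S := by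
  apply SemidirectProduct.hom_ext
  · apply khom_ext
    intro m
    show Θ (Ξ (SemidirectProduct.inl (E m))) = SemidirectProduct.inl (E m)
    rw [Ξ, SemidirectProduct.lift_inl, ΞK_E, Θ_conjV]
  · apply MonoidHom.ext_mint
    show Θ (Ξ (SemidirectProduct.inr (Multiplicative.ofAdd 1))) = _
    rw [Ξ, SemidirectProduct.lift_inr, zpowersHom_apply]
    norm_num [Θ_A]

lemma Ξ_Θ_apply (g : GG) : Ξ (Θ g) = g := DFunLike.congr_fun Ξ_Θ g

lemma Θ_Ξ_apply (s : S) : Θ (Ξ s) = s := DFunLike.congr_fun Θ_Ξ s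


def Φk (k : K) (hk : k * k = 1) : K →* K :=
  CoprodI.lift (fun m => involHom (τ (Multiplicative.ofAdd m) k)
    (by rw [← map_mul, hk, map_one]))

lemma Φk_E (k : K) (hk : k * k = 1) (m : ℤ) :
    Φk k hk (E m) = τ (Multiplicative.ofAdd m) k := by
  rw [E, Φk, CoprodI.lift_of, involHom_xx]

end Stmt9Aux

open Stmt9Aux in
/-- In G = ℤ ∗ ℤ/2ℤ with A generating the ℤ factor and V the ℤ/2ℤ factor,
any automorphism fixing A sends V to A^n V A^{-n} for some n. -/
theorem stmt_9
    (A : Monoid.Coprod (Multiplicative ℤ) (Multiplicative (ZMod 2)))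
    (V : Monoid.Coprod (Multiplicative ℤ) (Multiplicative (ZMod 2)))
    (hA : A = Monoid.Coprod.inl (Multiplicative.ofAdd (1 : ℤ)))
    (hV : V = Monoid.Coprod.inr (Multiplicative.ofAdd (1 : ZMod 2)))
    (φ : Monoid.Coprod (Multiplicative ℤ) (Multiplicative (ZMod 2)) ≃*
         Monoid.Coprod (Multiplicative ℤ) (Multiplicative (ZMod 2)))
    (hφA : φ A = A) :
    ∃ n : ℤ, φ V = A ^ n * V * A ^ (-n) := by
  subst hA hV
  have hφA' : φ Agen = Agen := hφA
  show ∃ n : ℤ, φ Vgen = Agen ^ n * Vgen * Agen ^ (-n)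
  have hVne : (Vgen : GG) ≠ 1 := by
    intro h
    have h1 := congrArg Θ h
    rw [Θ_V, map_one] at h1
    exact E_ne_one 0 (SemidirectProduct.inl_injective
      (h1.trans (map_one (SemidirectProduct.inl (φ := τ))).symm))
  have hWsq : φ Vgen * φ Vgen = 1 := by rw [← map_mul, Vgen_sq, map_one]
  have hWne : φ Vgen ≠ 1 := fun h => hVne (by
    have h1 := congrArg φ.symm h
    rwa [MulEquiv.symm_apply_apply, map_one] at h1)
  -- the second component of `Θ (φ Vgen)` is trivial
  have hz : SemidirectProduct.rightHom (Θ (φ Vgen)) = 1 := by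
    have h2 : SemidirectProduct.rightHom (Θ (φ Vgen)) *
        SemidirectProduct.rightHom (Θ (φ Vgen)) = 1 := by
      rw [← map_mul, ← map_mul, hWsq, map_one, map_one]
    have h3 := congrArg Multiplicative.toAdd h2
    rw [toAdd_mul, toAdd_one] at h3
    have h4 : Multiplicative.toAdd (SemidirectProduct.rightHom (Θ (φ Vgen)))
        = Multiplicative.toAdd (1 : Multiplicative ℤ) := by rw [toAdd_one]; omega
    exact Multiplicative.toAdd.injective h4
  set k := (Θ (φ Vgen)).left with hkdef
  have hΘW : Θ (φ Vgen) = SemidirectProduct.inl k := by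
    conv_lhs => rw [← SemidirectProduct.inl_left_mul_inr_right (Θ (φ Vgen))]
    have : (Θ (φ Vgen)).right = 1 := hz
    rw [this, map_one, mul_one]
  have hksq : k * k = 1 := by
    apply SemidirectProduct.inl_injective (φ := τ)
    rw [map_mul, ← hΘW, ← map_mul, hWsq, map_one, map_one]
  have hkne : k ≠ 1 := fun h => hWne (by
    rw [← Ξ_Θ_apply (φ Vgen), hΘW, h, map_one, map_one])
  -- the key identity
  have hkey : ∀ y : K, Θ (φ (Ξ (SemidirectProduct.inl y)))
      = SemidirectProduct.inl (Φk k hksq y) := by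
    have heq : ((Θ.comp φ.toMonoidHom).comp Ξ).comp SemidirectProduct.inl
        = SemidirectProduct.inl.comp (Φk k hksq) := by
      apply khom_ext
      intro m
      show Θ (φ (Ξ (SemidirectProduct.inl (E m)))) = SemidirectProduct.inl (Φk k hksq (E m))
      have hφconj : φ (conjV m) = Agen ^ m * φ Vgen * Agen ^ (-m) := by
        rw [conjV, map_mul, map_mul, map_zpow, map_zpow, hφA']
      rw [Ξ, SemidirectProduct.lift_inl, ΞK_E, Φk_E, hφconj, map_mul, map_mul,
        Θ_Apow, Θ_Apow, hΘW]
      have h2 : Multiplicative.ofAdd (-m) = (Multiplicative.ofAdd m)⁻¹ := by norm_num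
      rw [h2, ← SemidirectProduct.inl_aut]
    intro y
    exact DFunLike.congr_fun heq y
  -- rightHom ∘ Θ is φ-invariant
  have hright : ∀ g : GG, SemidirectProduct.rightHom (Θ (φ g))
      = SemidirectProduct.rightHom (Θ g) := by
    have heq : ((SemidirectProduct.rightHom.comp Θ).comp φ.toMonoidHom)
        = SemidirectProduct.rightHom.comp Θ := by
      apply Coprod.hom_ext
      · apply MonoidHom.ext_mint
        show SemidirectProduct.rightHom (Θ (φ Agen)) = SemidirectProduct.rightHom (Θ Agen)
        rw [hφA']
      · apply c2_hom_ext
        show SemidirectProduct.rightHom (Θ (φ Vgen)) = SemidirectProduct.rightHom (Θ Vgen)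
        rw [hz, Θ_V, SemidirectProduct.rightHom_inl]
    intro g
    exact DFunLike.congr_fun heq g
  -- use surjectivity of φ
  obtain ⟨x0, hx0⟩ := φ.surjective Vgen
  have hx0r : (Θ x0).right = 1 := by
    have : SemidirectProduct.rightHom (Θ x0) = 1 := by
      rw [← hright x0, hx0, Θ_V, SemidirectProduct.rightHom_inl]
    exact this
  set y := (Θ x0).left with hydef
  have hΘx0 : Θ x0 = SemidirectProduct.inl y := by
    conv_lhs => rw [← SemidirectProduct.inl_left_mul_inr_right (Θ x0)]
    rw [hx0r, map_one, mul_one]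
  have hyE : Φk k hksq y = E 0 := by
    have h1 := hkey y
    rw [← hΘx0, Ξ_Θ_apply, hx0, Θ_V] at h1
    exact (SemidirectProduct.inl_injective h1).symm
  have hyne : y ≠ 1 := by
    intro h
    apply hVne
    rw [← hx0]
    have hx01 : x0 = 1 := by
      have h1 := congrArg Ξ hΘx0
      rwa [Ξ_Θ_apply, h, map_one] at h1
    rw [hx01, map_one]
  obtain ⟨n, hn⟩ := core k hksq hkne y hyne (Φk k hksq) (Φk_E k hksq) hyE
  refine ⟨n, ?_⟩
  calc φ Vgen = Ξ (Θ (φ Vgen)) := (Ξ_Θ_apply _).symm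
    _ = Ξ (SemidirectProduct.inl (E n)) := by rw [hΘW, hn]
    _ = conjV n := by rw [Ξ, SemidirectProduct.lift_inl, ΞK_E]
    _ = Agen ^ n * Vgen * Agen ^ (-n) := rfl
end

section
/- Let G = ℤ * ℤ/2ℤ with A generating the ℤ factor and V the order-2 generator. For w ∈ G, the subgroup generated by A and w V w^{-1} is all of G if and only if w V w^{-1} = A^n V A^{-n} for some integer n. -/
open Monoid

namespace Stmt10

abbrev G := Monoid.Coprod (Multiplicative ℤ) (Multiplicative (ZMod 2))

def AA : G := Coprod.inl (Multiplicative.ofAdd (1 : ℤ))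
def VV : G := Coprod.inr (Multiplicative.ofAdd (1 : ZMod 2))

lemma VV_mul_VV : VV * VV = 1 := by
  rw [VV, ← map_mul]
  have h : (Multiplicative.ofAdd (1 : ZMod 2)) * (Multiplicative.ofAdd (1 : ZMod 2)) = 1 := by
    decide
  rw [h, map_one]

lemma VV_inv : VV⁻¹ = VV := inv_eq_of_mul_eq_one_right VV_mul_VV

lemma VV_cancel (x : G) : VV * (VV * x) = x := by
  rw [← mul_assoc, VV_mul_VV, one_mul]

lemma AA_zpow (n : ℤ) : AA ^ n = Coprod.inl (Multiplicative.ofAdd n) := by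
  rw [AA, ← map_zpow]
  congr 1
  rw [← ofAdd_zsmul]
  norm_num

/-! ### Normal form model -/

def R (l : List ℤ) : Prop := ∀ z ∈ l.dropLast, z ≠ 0

lemma R_nil : R [] := by simp [R]

lemma mem_dropLast_cons {b z : ℤ} {l : List ℤ} (hz : z ∈ l.dropLast) : z ∈ (b :: l).dropLast := by
  cases l with
  | nil => simp at hz
  | cons c l' => rw [List.dropLast_cons₂]; exact List.mem_cons_of_mem _ hz

lemma R_of_cons {b : ℤ} {l : List ℤ} (h : R (b :: l)) : R l :=
  fun z hz => h z (mem_dropLast_cons hz)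

lemma R_cons {b : ℤ} {l : List ℤ} (h : R l) (hb : b ≠ 0) : R (b :: l) := by
  intro z hz
  cases l with
  | nil => simp at hz
  | cons c l' =>
    rw [List.dropLast_cons₂, List.mem_cons] at hz
    rcases hz with rfl | hz
    · exact hb
    · exact h z hz

def v0 (x : ℤ × List ℤ) : ℤ × List ℤ :=
  if x.1 = 0 then
    match x.2 with
    | [] => (0, [0])
    | b :: l => (b, l)
  else (0, x.1 :: x.2)

lemma v0_zero_nil : v0 (0, []) = (0, [0]) := rfl
lemma v0_zero_cons (b : ℤ) (l : List ℤ) : v0 (0, b :: l) = (b, l) := rfl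
lemma v0_of_ne {a : ℤ} (ha : a ≠ 0) (l : List ℤ) : v0 (a, l) = (0, a :: l) := by
  simp [v0, ha]

lemma R_v0 {x : ℤ × List ℤ} (h : R x.2) : R (v0 x).2 := by
  obtain ⟨a, l⟩ := x
  by_cases ha : a = 0
  · subst ha
    cases l with
    | nil => intro z hz; simp [v0_zero_nil] at hz
    | cons b l' =>
      rw [v0_zero_cons]
      exact R_of_cons h
  · rw [v0_of_ne ha]
    exact R_cons h ha

lemma v0_v0 {a : ℤ} {l : List ℤ} (h : R l) : v0 (v0 (a, l)) = (a, l) := by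
  by_cases ha : a = 0
  · subst ha
    cases l with
    | nil => rfl
    | cons b l' =>
      rw [v0_zero_cons]
      by_cases hb : b = 0
      · subst hb
        have hl' : l' = [] := by
          cases l' with
          | nil => rfl
          | cons c l'' =>
            exact absurd rfl (h 0 (by rw [List.dropLast_cons₂]; exact List.mem_cons_self))
        subst hl'; rfl
      · rw [v0_of_ne hb]
  · rw [v0_of_ne ha, v0_zero_cons]

def Om : Type := {x : ℤ × List ℤ // R x.2}

def sigV : Equiv.Perm Om where
  toFun x := ⟨v0 x.1, R_v0 x.2⟩
  invFun x := ⟨v0 x.1, R_v0 x.2⟩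
  left_inv x := Subtype.ext (by obtain ⟨⟨a, l⟩, h⟩ := x; exact v0_v0 h)
  right_inv x := Subtype.ext (by obtain ⟨⟨a, l⟩, h⟩ := x; exact v0_v0 h)

def phi (n : ℤ) : Equiv.Perm Om where
  toFun x := ⟨(x.1.1 + n, x.1.2), x.2⟩
  invFun x := ⟨(x.1.1 - n, x.1.2), x.2⟩
  left_inv x := Subtype.ext (by simp)
  right_inv x := Subtype.ext (by simp)

lemma sigV_apply_sigV (x : Om) : sigV (sigV x) = x := by
  obtain ⟨⟨a, l⟩, h⟩ := x
  exact Subtype.ext (v0_v0 h)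

lemma sigV_sigV : sigV * sigV = 1 := by
  ext x
  rw [Equiv.Perm.mul_apply, Equiv.Perm.one_apply, sigV_apply_sigV]

def PhiA : Multiplicative ℤ →* Equiv.Perm Om :=
  MonoidHom.mk' (fun m => phi m.toAdd) (by
    intro m n
    show phi (m * n).toAdd = phi m.toAdd * phi n.toAdd
    rw [toAdd_mul]
    apply Equiv.ext
    intro x
    rw [Equiv.Perm.mul_apply]
    apply Subtype.ext
    show ((x.1.1 + (m.toAdd + n.toAdd), x.1.2) : ℤ × List ℤ)
      = ((x.1.1 + n.toAdd + m.toAdd, x.1.2) : ℤ × List ℤ)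
    rw [add_assoc, add_comm m.toAdd])

def PhiV : Multiplicative (ZMod 2) →* Equiv.Perm Om :=
  MonoidHom.mk' (fun m => if m.toAdd = 1 then sigV else 1) (by
    have h2 : ∀ z : ZMod 2, z = 0 ∨ z = 1 := by decide
    intro m n
    show (if (m * n).toAdd = 1 then sigV else 1)
      = (if m.toAdd = 1 then sigV else 1) * (if n.toAdd = 1 then sigV else 1)
    rcases h2 m.toAdd with hm | hm <;> rcases h2 n.toAdd with hn | hn
    · rw [toAdd_mul, hm, hn]
      simp
    · rw [toAdd_mul, hm, hn]
      simp
    · rw [toAdd_mul, hm, hn]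
      simp
    · rw [toAdd_mul, hm, hn]
      simp [sigV_sigV])

def rho : G →* Equiv.Perm Om := Coprod.lift PhiA PhiV

lemma rho_inl (n : ℤ) : rho (Coprod.inl (Multiplicative.ofAdd n)) = phi n := rfl

lemma rho_VV : rho VV = sigV := by
  show (if (1 : ZMod 2) = 1 then sigV else 1) = sigV
  rw [if_pos rfl]

def Vp : List ℤ → G
  | [] => 1
  | b :: l => VV * Coprod.inl (Multiplicative.ofAdd b) * Vp l

@[simp] lemma Vp_nil : Vp [] = 1 := rfl
@[simp] lemma Vp_cons (b : ℤ) (l : List ℤ) :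
    Vp (b :: l) = VV * Coprod.inl (Multiplicative.ofAdd b) * Vp l := rfl

lemma Vp_append (s t : List ℤ) : Vp (s ++ t) = Vp s * Vp t := by
  induction s with
  | nil => simp
  | cons b s ih => simp [ih, mul_assoc]

def pr (x : ℤ × List ℤ) : G := Coprod.inl (Multiplicative.ofAdd x.1) * Vp x.2

def ee : Om := ⟨(0, []), R_nil⟩

lemma pr_e : pr (0, []) = 1 := by simp [pr]

lemma pr_phi (n : ℤ) (x : Om) :
    pr ((phi n x).1) = Coprod.inl (Multiplicative.ofAdd n) * pr x.1 := by
  obtain ⟨⟨a, l⟩, h⟩ := x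
  show pr (a + n, l) = _
  rw [pr, pr, add_comm a n, ofAdd_add, map_mul, mul_assoc]

lemma pr_v0 (a : ℤ) (l : List ℤ) : pr (v0 (a, l)) = VV * pr (a, l) := by
  by_cases ha : a = 0
  · subst ha
    cases l with
    | nil => simp [v0_zero_nil, pr]
    | cons b l' =>
      rw [v0_zero_cons]
      simp only [pr, Vp_cons]
      simp [VV_cancel, mul_assoc]
  · rw [v0_of_ne ha]
    simp only [pr, Vp_cons]
    simp [mul_assoc]

lemma pr_sigV (x : Om) : pr ((sigV x).1) = VV * pr x.1 := by
  obtain ⟨⟨a, l⟩, h⟩ := x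
  exact pr_v0 a l

lemma pr_rho (g : G) : ∀ x : Om, pr ((rho g x).1) = g * pr x.1 := by
  induction g using Coprod.induction_on with
  | inl m =>
    intro x
    have h : (Coprod.inl m : G) = Coprod.inl (Multiplicative.ofAdd m.toAdd) := by simp
    rw [h, rho_inl, pr_phi]
  | inr m =>
    intro x
    have h2 : m.toAdd = 0 ∨ m.toAdd = 1 := by
      have : ∀ z : ZMod 2, z = 0 ∨ z = 1 := by decide
      exact this _
    rcases h2 with h | h
    · have hm : m = 1 := by
        rw [← ofAdd_toAdd m, h, ofAdd_zero]
      rw [hm, map_one, map_one, Equiv.Perm.one_apply, one_mul]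
    · have hm : Coprod.inr m = VV := by
        rw [VV, ← ofAdd_toAdd m, h]
      rw [hm, rho_VV, pr_sigV]
  | mul g₁ g₂ h₁ h₂ =>
    intro x
    rw [map_mul, Equiv.Perm.mul_apply, h₁, h₂, mul_assoc]

def nu (g : G) : Om := rho g ee

lemma pr_nu (g : G) : pr (nu g).1 = g := by
  rw [nu, pr_rho g ee]
  show g * pr (0, []) = g
  rw [pr_e, mul_one]

lemma sectV : ∀ (l : List ℤ) (h : R l), rho (Vp l) ee = ⟨(0, l), h⟩ := by
  intro l
  induction l with
  | nil => intro h; rw [Vp, map_one]; rfl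
  | cons b l' ih =>
    intro h
    have hR' : R l' := R_of_cons h
    rw [Vp_cons, map_mul, map_mul, rho_VV, rho_inl, Equiv.Perm.mul_apply, Equiv.Perm.mul_apply,
      ih hR']
    apply Subtype.ext
    show v0 (0 + b, l') = (0, b :: l')
    rw [zero_add]
    by_cases hb : b = 0
    · subst hb
      have hl' : l' = [] := by
        cases l' with
        | nil => rfl
        | cons c l'' =>
          exact absurd rfl (h 0 (by rw [List.dropLast_cons₂]; exact List.mem_cons_self))
      subst hl'; rfl
    · exact v0_of_ne hb l'

lemma sect (a : ℤ) (l : List ℤ) (h : R l) : rho (pr (a, l)) ee = ⟨(a, l), h⟩ := by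
  rw [pr, map_mul, rho_inl, Equiv.Perm.mul_apply, sectV l h]
  apply Subtype.ext
  show ((0 + a, l) : ℤ × List ℤ) = (a, l)
  rw [zero_add]

lemma mem_closure_AV (g : G) : g ∈ Subgroup.closure {AA, VV} := by
  induction g using Coprod.induction_on with
  | inl m =>
    have : Coprod.inl m = AA ^ m.toAdd := by rw [AA_zpow]; simp
    rw [this]
    exact zpow_mem (Subgroup.subset_closure (by simp)) _
  | inr m =>
    have h2 : m.toAdd = 0 ∨ m.toAdd = 1 := by
      have : ∀ z : ZMod 2, z = 0 ∨ z = 1 := by decide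
      exact this _
    rcases h2 with h | h
    · have hm : m = 1 := by rw [← ofAdd_toAdd m, h, ofAdd_zero]
      rw [hm, map_one]; exact one_mem _
    · have hm : Coprod.inr m = VV := by rw [VV, ← ofAdd_toAdd m, h]
      rw [hm]
      exact Subgroup.subset_closure (by simp)
  | mul g₁ g₂ h₁ h₂ => exact mul_mem h₁ h₂

lemma top_AV : Subgroup.closure {AA, VV} = ⊤ :=
  top_unique fun g _ => mem_closure_AV g

/-! ### The ping-pong invariant -/

inductive Q (B : List ℤ) : List ℤ → Prop
  | nil : Q B []
  | cons (c : ℤ) (l : List ℤ) : Q B l → (l = [] ∨ c ≠ 0) → Q B (B ++ c :: l)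

lemma R_of_Q {B : List ℤ} (hB : ∀ z ∈ B, z ≠ 0) {l : List ℤ} (h : Q B l) : R l := by
  induction h with
  | nil => exact R_nil
  | cons c l hq hc ih =>
    intro z hz
    rw [List.dropLast_append_of_ne_nil (List.cons_ne_nil c l), List.mem_append] at hz
    rcases hz with hz | hz
    · exact hB z hz
    · cases l with
      | nil => simp at hz
      | cons d l' =>
        rw [List.dropLast_cons₂, List.mem_cons] at hz
        rcases hz with rfl | hz
        · rcases hc with hc | hc
          · exact absurd hc (List.cons_ne_nil d l')
          · exact hc
        · exact ih z hz

lemma Q_ne_single {B : List ℤ} (hB : ∀ z ∈ B, z ≠ 0) (hBne : B ≠ []) {l : List ℤ}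
    (h : Q B l) : l ≠ [0] := by
  obtain ⟨b, B', rfl⟩ : ∃ b B', B = b :: B' := by
    cases B with
    | nil => exact absurd rfl hBne
    | cons b B' => exact ⟨b, B', rfl⟩
  induction h with
  | nil => simp
  | cons c l hq hc ih =>
    intro hEq
    rw [List.cons_append] at hEq
    exact hB b List.mem_cons_self (List.cons_eq_cons.mp hEq).1

lemma core (p : List ℤ) (hp : p ≠ []) (hz : ∀ z ∈ p, z ≠ 0) :
    VV ∉ Subgroup.closure {AA, Vp p * VV * (Vp p)⁻¹} := by
  intro hmem
  obtain ⟨y, hy⟩ : ∃ y, y = Vp p * VV * (Vp p)⁻¹ := ⟨_, rfl⟩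
  rw [← hy] at hmem
  obtain ⟨B, hBdef⟩ : ∃ B, B = p ++ (p.map (fun z => -z)).reverse := ⟨_, rfl⟩
  have hB : ∀ z ∈ B, z ≠ 0 := by
    intro z hzB
    rw [hBdef, List.mem_append] at hzB
    rcases hzB with h | h
    · exact hz z h
    · rw [List.mem_reverse, List.mem_map] at h
      obtain ⟨u, hu, rfl⟩ := h
      exact neg_ne_zero.mpr (hz u hu)
  have hBne : B ≠ [] := by
    rw [hBdef]
    intro hc
    exact hp (List.append_eq_nil_iff.mp hc).1
  have rev_neg : ∀ q : List ℤ, Vp ((q.map (fun z => -z)).reverse) = VV * (Vp q)⁻¹ * VV := by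
    intro q
    induction q with
    | nil => simp [Vp, VV_mul_VV]
    | cons b t ih =>
      rw [List.map_cons, List.reverse_cons, Vp_append, ih, Vp_cons, Vp_cons, Vp_nil]
      rw [mul_inv_rev, mul_inv_rev, VV_inv, ← map_inv, ← ofAdd_neg]
      simp [mul_assoc, VV_cancel, VV_mul_VV]
  have hyB : y = Vp B * VV := by
    rw [hBdef, Vp_append, rev_neg p, hy]
    simp [mul_assoc, VV_mul_VV, VV_cancel]
  have hy2 : y * y = 1 := by
    have h : y * y = Vp p * (VV * VV) * (Vp p)⁻¹ := by rw [hy]; group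
    rw [h, VV_mul_VV, mul_one, mul_inv_cancel]
  have hyinv : y⁻¹ = y := inv_eq_of_mul_eq_one_right hy2
  have k1 : ∀ (a : ℤ) (l : List ℤ), y * pr (a, l) = pr (0, B ++ a :: l) := by
    intro a l
    rw [hyB]
    show Vp B * VV * (Coprod.inl (Multiplicative.ofAdd a) * Vp l)
      = Coprod.inl (Multiplicative.ofAdd 0) * Vp (B ++ a :: l)
    rw [Vp_append, Vp_cons]
    simp [mul_assoc]
  have k2 : ∀ (c : ℤ) (l' : List ℤ), y * pr (0, B ++ c :: l') = pr (c, l') := by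
    intro c l'
    rw [← k1 c l', ← mul_assoc, hy2, one_mul]
  -- the y-step
  have ystep : ∀ x : Om, Q B x.1.2 → Q B ((rho y x).1.2) := by
    rintro ⟨⟨a, l⟩, hR⟩ hQ
    show Q B ((rho y ⟨(a, l), hR⟩).1.2)
    have hx : (⟨(a, l), hR⟩ : Om) = rho (pr (a, l)) ee := (sect a l hR).symm
    cases hQ with
    | nil =>
      have hQ' : Q B (B ++ [a]) := Q.cons a [] Q.nil (Or.inl rfl)
      have hR' : R (B ++ [a]) := R_of_Q hB hQ'
      rw [hx, ← Equiv.Perm.mul_apply, ← map_mul, k1 a [], sect 0 _ hR']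
      exact hQ'
    | cons c l' hq' hc =>
      by_cases ha : a = 0
      · subst ha
        have hR' : R l' := R_of_Q hB hq'
        rw [hx, ← Equiv.Perm.mul_apply, ← map_mul]
        show Q B ((rho (y * pr (0, B ++ c :: l')) ee).1.2)
        rw [k2 c l', sect c l' hR']
        exact hq'
      · have hQl : Q B (B ++ c :: l') := Q.cons c l' hq' hc
        have hQ' : Q B (B ++ a :: (B ++ c :: l')) := Q.cons a _ hQl (Or.inr ha)
        have hR' := R_of_Q hB hQ'
        rw [hx, ← Equiv.Perm.mul_apply, ← map_mul]
        show Q B ((rho (y * pr (a, B ++ c :: l')) ee).1.2)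
        rw [k1 a _, sect 0 _ hR']
        exact hQ'
  -- closure induction
  have main : ∀ g ∈ Subgroup.closure {AA, y},
      (∀ x : Om, Q B x.1.2 → Q B ((rho g x).1.2)) ∧
      (∀ x : Om, Q B x.1.2 → Q B ((rho g⁻¹ x).1.2)) := by
    intro g hg
    induction hg using Subgroup.closure_induction with
    | mem t ht =>
      rcases ht with rfl | rfl
      · constructor
        · intro x hx
          rw [AA, rho_inl]
          exact hx
        · intro x hx
          have : AA⁻¹ = Coprod.inl (Multiplicative.ofAdd (-1 : ℤ)) := by
            rw [AA, ← map_inv, ← ofAdd_neg]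
          rw [this, rho_inl]
          exact hx
      · exact ⟨ystep, by rw [hyinv]; exact ystep⟩
    | one =>
      constructor <;> intro x hx <;> simp [hx]
    | mul g₁ g₂ hg₁ hg₂ ih₁ ih₂ =>
      constructor
      · intro x hx
        rw [map_mul, Equiv.Perm.mul_apply]
        exact ih₁.1 _ (ih₂.1 _ hx)
      · intro x hx
        rw [mul_inv_rev, map_mul, Equiv.Perm.mul_apply]
        exact ih₂.2 _ (ih₁.2 _ hx)
    | inv g₁ hg₁ ih =>
      exact ⟨ih.2, by rw [inv_inv]; exact ih.1⟩
  have hQe : Q B ((ee : Om)).1.2 := Q.nil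
  have := (main VV hmem).1 ee hQe
  rw [rho_VV] at this
  have hval : ((sigV ee).1.2) = [0] := rfl
  rw [hval] at this
  exact Q_ne_single hB hBne this rfl

/-! ### Main theorem -/

lemma main_iff (w : G) :
    Subgroup.closure {AA, w * VV * w⁻¹} = ⊤ ↔
      ∃ n : ℤ, w * VV * w⁻¹ = AA ^ n * VV * AA ^ (-n) := by
  constructor
  · intro htop
    obtain ⟨⟨⟨a₀, l⟩, hR⟩, hnu⟩ : ∃ x : Om, nu w = x := ⟨nu w, rfl⟩
    have hw : Coprod.inl (Multiplicative.ofAdd a₀) * Vp l = w := by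
      have h := pr_nu w
      rw [hnu] at h
      exact h
    have hA0 : Coprod.inl (Multiplicative.ofAdd a₀) = AA ^ a₀ := (AA_zpow a₀).symm
    have hAneg : (Coprod.inl (Multiplicative.ofAdd a₀) : G)⁻¹ = AA ^ (-a₀) := by
      rw [AA_zpow, ofAdd_neg, map_inv]
    rcases List.eq_nil_or_concat' l with rfl | ⟨q, z, rfl⟩
    · refine ⟨a₀, ?_⟩
      rw [← hw]
      show Coprod.inl (Multiplicative.ofAdd a₀) * Vp [] * VV *
          (Coprod.inl (Multiplicative.ofAdd a₀) * Vp [])⁻¹ = _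
      rw [Vp_nil, mul_one, ← hA0, ← hAneg]
    · -- find p with w * VV * w⁻¹ = A^a₀ * (Vp p * VV * (Vp p)⁻¹) * A^(-a₀)
      have hbad : ∀ p : List ℤ, p ≠ [] → (∀ u ∈ p, u ≠ 0) →
          w * VV * w⁻¹ = Coprod.inl (Multiplicative.ofAdd a₀) * (Vp p * VV * (Vp p)⁻¹) *
            (Coprod.inl (Multiplicative.ofAdd a₀))⁻¹ → False := by
        intro p hpne hpz hxy
        have hVmem : VV ∈ Subgroup.closure {AA, Vp p * VV * (Vp p)⁻¹} := by
          have hle : Subgroup.closure {AA, w * VV * w⁻¹} ≤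
              Subgroup.closure {AA, Vp p * VV * (Vp p)⁻¹} := by
            rw [Subgroup.closure_le]
            intro t ht
            rcases ht with rfl | rfl
            · exact Subgroup.subset_closure (by simp)
            · rw [hxy, hAneg, hA0]
              exact mul_mem (mul_mem (zpow_mem (Subgroup.subset_closure (by simp)) _)
                (Subgroup.subset_closure (by simp))) (zpow_mem (Subgroup.subset_closure (by simp)) _)
          apply hle
          rw [htop]
          trivial
        exact core p hpne hpz hVmem
      by_cases hgood : z = 0 ∧ q = []
      · obtain ⟨rfl, rfl⟩ := hgood
        refine ⟨a₀, ?_⟩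
        have hwv : Coprod.inl (Multiplicative.ofAdd a₀) * VV = w := by
          rw [← hw]
          show _ = Coprod.inl (Multiplicative.ofAdd a₀) * Vp [0]
          rw [Vp_cons, Vp_nil]
          simp
        rw [← hwv, ← hA0, ← hAneg]
        rw [mul_inv_rev, VV_inv]
        simp [mul_assoc, VV_cancel, VV_mul_VV]
      · exfalso
        by_cases hz0 : z = 0
        · subst hz0
          have hq : q ≠ [] := fun hc => hgood ⟨rfl, hc⟩
          obtain ⟨u, q', rfl⟩ : ∃ u q', q = u :: q' := by
            cases q with
            | nil => exact absurd rfl hq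
            | cons u q' => exact ⟨u, q', rfl⟩
          apply hbad (u :: q') (List.cons_ne_nil u q')
          · intro t ht
            have : t ∈ ((u :: q') ++ [0]).dropLast := by rw [List.dropLast_concat]; exact ht
            exact hR t this
          · have hVpl : Vp ((u :: q') ++ [0]) = Vp (u :: q') * VV := by
              rw [Vp_append, Vp_cons 0 [], Vp_nil, mul_one]
              simp
            rw [← hw, hVpl]
            rw [show Coprod.inl (Multiplicative.ofAdd a₀) * (Vp (u :: q') * VV)
                  = Coprod.inl (Multiplicative.ofAdd a₀) * Vp (u :: q') * VV from
                (mul_assoc _ _ _).symm]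
            rw [mul_inv_rev, VV_inv]
            simp [mul_assoc, mul_inv_rev, VV_cancel, VV_mul_VV]
        · apply hbad (q ++ [z]) (by simp)
          · intro t ht
            rw [List.mem_append] at ht
            rcases ht with ht | ht
            · exact hR t (by rw [List.dropLast_concat]; exact ht)
            · rw [List.mem_singleton] at ht
              subst ht; exact hz0
          · rw [← hw]
            simp [mul_assoc, mul_inv_rev]
  · rintro ⟨n, hn⟩
    apply top_unique
    rw [← top_AV, Subgroup.closure_le]
    intro t ht
    rcases ht with rfl | rfl
    · exact Subgroup.subset_closure (by simp)
    · have hVmem : VV = AA ^ (-n) * (w * VV * w⁻¹) * AA ^ n := by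
        rw [hn]
        group
      have hmem2 : AA ^ (-n) * (w * VV * w⁻¹) * AA ^ n ∈
          Subgroup.closure {AA, w * VV * w⁻¹} :=
        mul_mem (mul_mem (zpow_mem (Subgroup.subset_closure (by simp)) _)
          (Subgroup.subset_closure (by simp))) (zpow_mem (Subgroup.subset_closure (by simp)) _)
      rwa [← hVmem] at hmem2

end Stmt10

open Monoid

/-- In G = ℤ ∗ ℤ/2ℤ, for w ∈ G the subgroup generated by A and w V w⁻¹ is
all of G iff w V w⁻¹ = A^n V A^{-n} for some integer n. -/
theorem stmt_10
    (A V w : Monoid.Coprod (Multiplicative ℤ) (Multiplicative (ZMod 2)))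
    (hA : A = Monoid.Coprod.inl (Multiplicative.ofAdd (1 : ℤ)))
    (hV : V = Monoid.Coprod.inr (Multiplicative.ofAdd (1 : ZMod 2))) :
    Subgroup.closure {A, w * V * w⁻¹} = ⊤ ↔
      ∃ n : ℤ, w * V * w⁻¹ = A ^ n * V * A ^ (-n) := by
  subst hA; subst hV
  exact Stmt10.main_iff w
end

section
/- Let S be the group with presentation on generators t₁, t₀, a, v and defining relations: t₀a = at₀, v t₀ = t₀^{-1} v, v² a = a v², t₁ v = v t₁, t₁ t₀ = t₀ t₁, t₁ a = a t₁. Let H be the subgroup generated by t₀, t₁ and v². Then H is a normal subgroup of S and the quotient S/H is isomorphic to the free product ℤ * ℤ/2ℤ, where the images of a and v generate the ℤ and ℤ/2ℤ factors respectively. -/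
open Monoid FreeGroup

/-- Generators: 0 = t₁, 1 = t₀, 2 = a, 3 = v. -/
def stmt11Rels : Set (FreeGroup (Fin 4)) :=
  { of 1 * of 2 * (of 2 * of 1)⁻¹,               -- t₀a = at₀
    of 3 * of 1 * ((of 1)⁻¹ * of 3)⁻¹,           -- vt₀ = t₀⁻¹v
    (of 3) ^ 2 * of 2 * (of 2 * (of 3) ^ 2)⁻¹,   -- v²a = av²
    of 0 * of 3 * (of 3 * of 0)⁻¹,               -- t₁v = vt₁
    of 0 * of 1 * (of 1 * of 0)⁻¹,               -- t₁t₀ = t₀t₁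
    of 0 * of 2 * (of 2 * of 0)⁻¹ }              -- t₁a = at₁

namespace Stmt11Aux

abbrev S := PresentedGroup stmt11Rels

abbrev x (i : Fin 4) : S := PresentedGroup.of i

lemma rel_one {r : FreeGroup (Fin 4)} (h : r ∈ stmt11Rels) :
    PresentedGroup.mk stmt11Rels r = 1 :=
  (QuotientGroup.eq_one_iff _).mpr (Subgroup.subset_normalClosure h)

lemma rel_eq {r s : FreeGroup (Fin 4)} (h : r * s⁻¹ ∈ stmt11Rels) :
    PresentedGroup.mk stmt11Rels r = PresentedGroup.mk stmt11Rels s := by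
  have h1 := rel_one h
  rw [MonoidHom.map_mul, MonoidHom.map_inv] at h1
  exact mul_inv_eq_one.mp h1

lemma hR1 : x 1 * x 2 = x 2 * x 1 := by
  simpa [map_mul, x, PresentedGroup.of] using rel_eq (r := of 1 * of 2) (s := of 2 * of 1) (Set.mem_insert _ _)

lemma hR2 : x 3 * x 1 = (x 1)⁻¹ * x 3 := by
  simpa [map_mul, map_inv, x, PresentedGroup.of] using
    rel_eq (r := of 3 * of 1) (s := (of 1)⁻¹ * of 3)
      (Set.mem_insert_of_mem _ (Set.mem_insert _ _))

lemma hR3 : (x 3) ^ 2 * x 2 = x 2 * (x 3) ^ 2 := by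
  simpa [map_mul, map_pow, x, PresentedGroup.of] using
    rel_eq (r := (of 3) ^ 2 * of 2) (s := of 2 * (of 3) ^ 2)
      (Set.mem_insert_of_mem _ (Set.mem_insert_of_mem _ (Set.mem_insert _ _)))

lemma hR4 : x 0 * x 3 = x 3 * x 0 := by
  simpa [map_mul, x, PresentedGroup.of] using
    rel_eq (r := of 0 * of 3) (s := of 3 * of 0)
      (Set.mem_insert_of_mem _ (Set.mem_insert_of_mem _ (Set.mem_insert_of_mem _
        (Set.mem_insert _ _))))

lemma hR5 : x 0 * x 1 = x 1 * x 0 := by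
  simpa [map_mul, x, PresentedGroup.of] using
    rel_eq (r := of 0 * of 1) (s := of 1 * of 0)
      (Set.mem_insert_of_mem _ (Set.mem_insert_of_mem _ (Set.mem_insert_of_mem _
        (Set.mem_insert_of_mem _ (Set.mem_insert _ _)))))

lemma hR6 : x 0 * x 2 = x 2 * x 0 := by
  simpa [map_mul, x, PresentedGroup.of] using
    rel_eq (r := of 0 * of 2) (s := of 2 * of 0)
      (Set.mem_insert_of_mem _ (Set.mem_insert_of_mem _ (Set.mem_insert_of_mem _
        (Set.mem_insert_of_mem _ (Set.mem_insert_of_mem _ rfl)))))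

/-- v t₀ v⁻¹ = t₀⁻¹ -/
lemma conj_v_t0 : x 3 * x 1 * (x 3)⁻¹ = (x 1)⁻¹ := by
  rw [hR2]; group

/-- t₀ v = v t₀⁻¹ -/
lemma e1 : x 1 * x 3 = x 3 * (x 1)⁻¹ := by
  calc x 1 * x 3 = (x 1 * (x 3 * x 1)) * (x 1)⁻¹ := by group
    _ = (x 1 * ((x 1)⁻¹ * x 3)) * (x 1)⁻¹ := by rw [hR2]
    _ = x 3 * (x 1)⁻¹ := by group

/-- v⁻¹ t₀ v = t₀⁻¹ -/
lemma conj_vinv_t0 : (x 3)⁻¹ * x 1 * x 3 = (x 1)⁻¹ := by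
  calc (x 3)⁻¹ * x 1 * x 3 = (x 3)⁻¹ * (x 1 * x 3) := by group
    _ = (x 3)⁻¹ * (x 3 * (x 1)⁻¹) := by rw [e1]
    _ = (x 1)⁻¹ := by group

/-- v² commutes with t₀ -/
lemma v2_comm_t0 : (x 3) ^ 2 * x 1 = x 1 * (x 3) ^ 2 := by
  calc (x 3) ^ 2 * x 1 = x 3 * (x 3 * x 1) := by rw [sq, mul_assoc]
    _ = x 3 * ((x 1)⁻¹ * x 3) := by rw [hR2]
    _ = (x 3 * (x 1)⁻¹) * x 3 := by rw [mul_assoc]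
    _ = (x 1 * x 3) * x 3 := by rw [← e1]
    _ = x 1 * (x 3) ^ 2 := by rw [mul_assoc, ← sq]

/-- t₁ commutes with v² -/
lemma t1_comm_v2 : x 0 * (x 3) ^ 2 = (x 3) ^ 2 * x 0 := by
  calc x 0 * (x 3) ^ 2 = (x 0 * x 3) * x 3 := by rw [sq, mul_assoc]
    _ = (x 3 * x 0) * x 3 := by rw [hR4]
    _ = x 3 * (x 0 * x 3) := by rw [mul_assoc]
    _ = x 3 * (x 3 * x 0) := by rw [hR4]
    _ = (x 3) ^ 2 * x 0 := by rw [sq, mul_assoc]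

lemma both_conj_of_comm {G : Type*} [Group G] {g t : G} {T : Set G} (ht : t ∈ T)
    (h : g * t = t * g) :
    g * t * g⁻¹ ∈ Subgroup.closure T ∧ g⁻¹ * t * g ∈ Subgroup.closure T := by
  have h1 : g * t * g⁻¹ = t := by rw [h]; group
  have h2 : g⁻¹ * t * g = t := by
    calc g⁻¹ * t * g = g⁻¹ * (t * g) := by group
      _ = g⁻¹ * (g * t) := by rw [← h]
      _ = t := by group
  rw [h1, h2]
  exact ⟨Subgroup.subset_closure ht, Subgroup.subset_closure ht⟩

lemma normalizer_helper {G : Type*} [Group G] (g : G) (T : Set G)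
    (h : ∀ t ∈ T, g * t * g⁻¹ ∈ Subgroup.closure T ∧ g⁻¹ * t * g ∈ Subgroup.closure T) :
    g ∈ Subgroup.normalizer (Subgroup.closure T : Set G) := by
  have key : ∀ (u : G), (∀ t ∈ T, u * t * u⁻¹ ∈ Subgroup.closure T) →
      ∀ n ∈ Subgroup.closure T, u * n * u⁻¹ ∈ Subgroup.closure T := by
    intro u hu n hn
    have hle : Subgroup.closure T ≤ (Subgroup.closure T).comap (MulAut.conj u).toMonoidHom :=
      (Subgroup.closure_le _).mpr (fun t ht => by
        simpa [Subgroup.mem_comap, MulAut.conj_apply] using hu t ht)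
    simpa [Subgroup.mem_comap, MulAut.conj_apply] using hle hn
  rw [Subgroup.mem_normalizer_iff]
  intro n
  constructor
  · exact fun hn => key g (fun t ht => (h t ht).1) n hn
  · intro hn
    have h2 : ∀ t ∈ T, g⁻¹ * t * (g⁻¹)⁻¹ ∈ Subgroup.closure T := by
      intro t ht; simpa using (h t ht).2
    have := key g⁻¹ h2 _ hn
    simpa [mul_assoc] using this

/-- The subgroup H = ⟨t₀, t₁, v²⟩. -/
abbrev H : Subgroup S := Subgroup.closure {x 1, x 0, (x 3) ^ 2}

lemma mem1 : x 1 ∈ ({x 1, x 0, (x 3) ^ 2} : Set S) := Set.mem_insert _ _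
lemma mem0 : x 0 ∈ ({x 1, x 0, (x 3) ^ 2} : Set S) :=
  Set.mem_insert_of_mem _ (Set.mem_insert _ _)
lemma mem3 : (x 3) ^ 2 ∈ ({x 1, x 0, (x 3) ^ 2} : Set S) :=
  Set.mem_insert_of_mem _ (Set.mem_insert_of_mem _ rfl)

lemma H_normal : H.Normal := by
  refine Subgroup.normalizer_eq_top_iff.mp ?_
  rw [Subgroup.eq_top_iff']
  intro g
  refine PresentedGroup.generated_by _ _ (fun j => ?_) g
  have h4 : ∀ i : Fin 4, i = 0 ∨ i = 1 ∨ i = 2 ∨ i = 3 := by decide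
  rcases h4 j with rfl | rfl | rfl | rfl
  · -- g = t₁ : commutes with everything
    refine normalizer_helper _ _ (fun t ht => ?_)
    rcases ht with rfl | rfl | rfl
    · exact both_conj_of_comm mem1 hR5
    · exact both_conj_of_comm mem0 rfl
    · exact both_conj_of_comm mem3 t1_comm_v2
  · -- g = t₀
    refine normalizer_helper _ _ (fun t ht => ?_)
    rcases ht with rfl | rfl | rfl
    · exact both_conj_of_comm mem1 rfl
    · exact both_conj_of_comm mem0 hR5.symm
    · exact both_conj_of_comm mem3 v2_comm_t0.symm
  · -- g = a
    refine normalizer_helper _ _ (fun t ht => ?_)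
    rcases ht with rfl | rfl | rfl
    · exact both_conj_of_comm mem1 hR1.symm
    · exact both_conj_of_comm mem0 hR6.symm
    · exact both_conj_of_comm mem3 hR3.symm
  · -- g = v
    refine normalizer_helper _ _ (fun t ht => ?_)
    rcases ht with rfl | rfl | rfl
    · constructor
      · show x 3 * x 1 * (x 3)⁻¹ ∈ H
        rw [conj_v_t0]
        exact Subgroup.inv_mem _ (Subgroup.subset_closure mem1)
      · show (x 3)⁻¹ * x 1 * x 3 ∈ H
        rw [conj_vinv_t0]
        exact Subgroup.inv_mem _ (Subgroup.subset_closure mem1)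
    · exact both_conj_of_comm mem0 hR4.symm
    · refine both_conj_of_comm mem3 ?_
      show x 3 * x 3 ^ 2 = x 3 ^ 2 * x 3
      rw [← pow_succ', ← pow_succ]

/-- The target map on generators. -/
def stmtF : Fin 4 → Monoid.Coprod (Multiplicative ℤ) (Multiplicative (ZMod 2)) :=
  fun i => if i = 2 then .inl (.ofAdd 1) else if i = 3 then .inr (.ofAdd 1) else 1

lemma stmtF0 : stmtF 0 = 1 := rfl
lemma stmtF1 : stmtF 1 = 1 := rfl
lemma stmtF2 : stmtF 2 = .inl (.ofAdd 1) := rfl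
lemma stmtF3 : stmtF 3 = .inr (.ofAdd 1) := rfl

lemma he : (Multiplicative.ofAdd (1 : ZMod 2)) ^ 2 = 1 := by decide

lemma hlift3 : FreeGroup.lift stmtF ((of 3 : FreeGroup (Fin 4)) ^ 2) = 1 := by
  rw [map_pow, FreeGroup.lift_apply_of, stmtF3, ← map_pow, he, _root_.map_one]

lemma hrels : ∀ r ∈ stmt11Rels, FreeGroup.lift stmtF r = 1 := by
  intro r hr
  rcases hr with rfl | rfl | rfl | rfl | rfl | rfl <;>
    simp [_root_.map_mul, _root_.map_inv, FreeGroup.lift_apply_of, stmtF0, stmtF1, stmtF2, stmtF3, hlift3]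

/-- The projection S → ℤ ∗ ℤ/2. -/
def π : PresentedGroup stmt11Rels →* Monoid.Coprod (Multiplicative ℤ) (Multiplicative (ZMod 2)) :=
  PresentedGroup.toGroup hrels

lemma π_of (i : Fin 4) : π (PresentedGroup.of i) = stmtF i := PresentedGroup.toGroup.of hrels

lemma π_surj : Function.Surjective π := by
  intro y
  induction y using Monoid.Coprod.induction_on with
  | inl m =>
    refine ⟨(PresentedGroup.of 2) ^ (m.toAdd), ?_⟩
    rw [map_zpow, π_of, stmtF2, ← map_zpow]
    congr 1
    rw [← ofAdd_zsmul]
    simp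
  | inr n =>
    have hn : n = 1 ∨ n = Multiplicative.ofAdd 1 := by revert n; decide
    rcases hn with rfl | rfl
    · exact ⟨1, by simp⟩
    · exact ⟨PresentedGroup.of 3, by rw [π_of, stmtF3]⟩
  | mul a b ha hb =>
    obtain ⟨u, rfl⟩ := ha
    obtain ⟨w, rfl⟩ := hb
    exact ⟨u * w, map_mul _ _ _⟩

lemma H_le_ker : H ≤ π.ker := by
  refine (Subgroup.closure_le _).mpr ?_
  intro t ht
  rcases ht with rfl | rfl | rfl
  · simp [MonoidHom.mem_ker, π_of, stmtF1]
  · simp [MonoidHom.mem_ker, π_of, stmtF0]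
  · show π ((x 3) ^ 2) = 1
    rw [map_pow, π_of, stmtF3, ← map_pow, he, _root_.map_one]

lemma ker_le_H : π.ker ≤ H := by
  haveI := H_normal
  set q : S →* S ⧸ H := QuotientGroup.mk' H with hq
  have hv2 : q (PresentedGroup.of 3) ^ 2 = 1 := by
    rw [← map_pow]
    exact (QuotientGroup.eq_one_iff _).mpr (Subgroup.subset_closure mem3)
  have hcond : (zmultiplesHom (Additive (S ⧸ H)) (Additive.ofMul (q (PresentedGroup.of 3))))
      ((2 : ℕ) : ℤ) = 0 := by
    rw [zmultiplesHom_apply]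
    rw [show ((2 : ℕ) : ℤ) • Additive.ofMul (q (PresentedGroup.of 3))
        = Additive.ofMul (q (PresentedGroup.of 3) ^ (((2 : ℕ) : ℤ))) from (ofMul_zpow _ _).symm]
    rw [zpow_natCast, hv2]
    rfl
  set f₁ : Multiplicative ℤ →* S ⧸ H := zpowersHom _ (q (PresentedGroup.of 2)) with hf₁
  set f₂ : Multiplicative (ZMod 2) →* S ⧸ H :=
    AddMonoidHom.toMultiplicativeLeft
      (ZMod.lift 2 ⟨zmultiplesHom (Additive (S ⧸ H))
        (Additive.ofMul (q (PresentedGroup.of 3))), hcond⟩) with hf₂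
  set φ : Monoid.Coprod (Multiplicative ℤ) (Multiplicative (ZMod 2)) →* S ⧸ H :=
    Monoid.Coprod.lift f₁ f₂ with hφ
  have hcomp : φ.comp π = q := by
    apply PresentedGroup.ext
    intro i
    have h4 : ∀ i : Fin 4, i = 0 ∨ i = 1 ∨ i = 2 ∨ i = 3 := by decide
    rcases h4 i with rfl | rfl | rfl | rfl
    · rw [MonoidHom.comp_apply, π_of, stmtF0, _root_.map_one]
      exact ((QuotientGroup.eq_one_iff _).mpr (Subgroup.subset_closure mem0)).symm
    · rw [MonoidHom.comp_apply, π_of, stmtF1, _root_.map_one]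
      exact ((QuotientGroup.eq_one_iff _).mpr (Subgroup.subset_closure mem1)).symm
    · rw [MonoidHom.comp_apply, π_of, stmtF2, hφ, Monoid.Coprod.lift_apply_inl, hf₁,
        zpowersHom_apply]
      simp
    · rw [MonoidHom.comp_apply, π_of, stmtF3, hφ, Monoid.Coprod.lift_apply_inr, hf₂]
      simp only [AddMonoidHom.coe_toMultiplicativeLeft, Function.comp_apply, toAdd_ofAdd]
      rw [show (1 : ZMod 2) = ((1 : ℤ) : ZMod 2) by norm_num, ZMod.lift_coe]
      simp only [zmultiplesHom_apply, one_zsmul]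
      rfl
  intro g hg
  have h1 : q g = 1 := by
    rw [← hcomp, MonoidHom.comp_apply, show π g = 1 from hg, _root_.map_one]
  exact (QuotientGroup.eq_one_iff g).mp h1

end Stmt11Aux

/-- In the presented group S = ⟨t₁,t₀,a,v | …⟩, the subgroup H = ⟨t₀,t₁,v²⟩
is normal and S/H ≅ ℤ ∗ ℤ/2ℤ, with the images of a and v generating the
ℤ and ℤ/2ℤ factors respectively (expressed via a surjection with kernel H). -/
theorem stmt_11 :
    (Subgroup.closure {PresentedGroup.of (rels := stmt11Rels) 1,
        PresentedGroup.of (rels := stmt11Rels) 0,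
        (PresentedGroup.of (rels := stmt11Rels) 3) ^ 2}).Normal ∧
    ∃ π : PresentedGroup stmt11Rels →*
        Monoid.Coprod (Multiplicative ℤ) (Multiplicative (ZMod 2)),
      Function.Surjective π ∧
      π.ker = Subgroup.closure {PresentedGroup.of (rels := stmt11Rels) 1,
        PresentedGroup.of (rels := stmt11Rels) 0,
        (PresentedGroup.of (rels := stmt11Rels) 3) ^ 2} ∧
      π (PresentedGroup.of 2) = Monoid.Coprod.inl (Multiplicative.ofAdd (1 : ℤ)) ∧
      π (PresentedGroup.of 3) = Monoid.Coprod.inr (Multiplicative.ofAdd (1 : ZMod 2)) := by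
  refine ⟨Stmt11Aux.H_normal, Stmt11Aux.π, Stmt11Aux.π_surj,
    le_antisymm Stmt11Aux.ker_le_H Stmt11Aux.H_le_ker, ?_, ?_⟩
  · exact Stmt11Aux.π_of 2
  · exact Stmt11Aux.π_of 3
end

section
/- Let G be a group with elements t₁, t₂, u₁, u₂ satisfying: (1) t₂t₁t₂ = t₁t₂t₁, (2) u₂u₁u₂ = u₁u₂u₁, (3) u₂u₁t₂ = t₁u₂u₁, (4) t₂u₁u₂ = u₁u₂t₁, (5) uᵢtᵢuᵢ^{-1} = tᵢ^{-1} for i = 1,2, and (6) u₂t₁t₂u₁ = t₁t₂. Then the element v := t₂t₁t₂u₁u₂u₁ satisfies v t₁ v^{-1} = t₁^{-1} and v t₂ v^{-1} = t₂^{-1}. -/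
/-- With the relations of Mod(N_{3,1}), v := t₂t₁t₂u₁u₂u₁ conjugates t₁ and
t₂ to their inverses. -/
theorem stmt_13 {G : Type*} [Group G] (t₁ t₂ u₁ u₂ : G)
    (h1 : t₂ * t₁ * t₂ = t₁ * t₂ * t₁)
    (h2 : u₂ * u₁ * u₂ = u₁ * u₂ * u₁)
    (h3 : u₂ * u₁ * t₂ = t₁ * u₂ * u₁)
    (h4 : t₂ * u₁ * u₂ = u₁ * u₂ * t₁)
    (h5₁ : u₁ * t₁ * u₁⁻¹ = t₁⁻¹)
    (h5₂ : u₂ * t₂ * u₂⁻¹ = t₂⁻¹)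
    (h6 : u₂ * t₁ * t₂ * u₁ = t₁ * t₂) :
    (t₂ * t₁ * t₂ * u₁ * u₂ * u₁) * t₁ * (t₂ * t₁ * t₂ * u₁ * u₂ * u₁)⁻¹ = t₁⁻¹ ∧
    (t₂ * t₁ * t₂ * u₁ * u₂ * u₁) * t₂ * (t₂ * t₁ * t₂ * u₁ * u₂ * u₁)⁻¹ = t₂⁻¹ := by
  have h5₁' : u₁ * t₁ = t₁⁻¹ * u₁ := by rw [← h5₁]; group
  have h5₂' : u₂ * t₂ = t₂⁻¹ * u₂ := by rw [← h5₂]; group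
  -- t₁ expressed via h4
  have ht1 : t₁ = u₂⁻¹ * u₁⁻¹ * t₂ * u₁ * u₂ := by
    rw [show u₂⁻¹ * u₁⁻¹ * t₂ * u₁ * u₂ = u₂⁻¹ * u₁⁻¹ * (t₂ * u₁ * u₂) by group, h4]; group
  -- t₂ expressed via h3
  have ht2 : t₂ = u₁⁻¹ * u₂⁻¹ * t₁ * u₂ * u₁ := by
    rw [show u₁⁻¹ * u₂⁻¹ * t₁ * u₂ * u₁ = u₁⁻¹ * u₂⁻¹ * (t₁ * u₂ * u₁) by group, ← h3]; group
  have e2 : u₁ * u₂ * u₁ * u₂⁻¹ * u₁⁻¹ = u₂ := by rw [← h2]; group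
  have key1 : u₁ * u₂ * u₁ * t₁ = t₂⁻¹ * (u₁ * u₂ * u₁) := by
    calc u₁ * u₂ * u₁ * t₁
        = (u₁ * u₂ * u₁ * u₂⁻¹ * u₁⁻¹) * t₂ * (u₁ * u₂) := by rw [ht1]; group
      _ = u₂ * t₂ * (u₁ * u₂) := by rw [e2]
      _ = t₂⁻¹ * (u₂ * u₁ * u₂) := by rw [h5₂']; group
      _ = t₂⁻¹ * (u₁ * u₂ * u₁) := by rw [h2]
  have key2 : u₁ * u₂ * u₁ * t₂ = t₁⁻¹ * (u₁ * u₂ * u₁) := by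
    calc u₁ * u₂ * u₁ * t₂
        = u₁ * t₁ * (u₂ * u₁) := by rw [ht2]; group
      _ = t₁⁻¹ * (u₁ * u₂ * u₁) := by rw [h5₁']; group
  constructor
  · have : t₂ * t₁ * t₂ * u₁ * u₂ * u₁ * t₁ = t₁⁻¹ * (t₂ * t₁ * t₂ * u₁ * u₂ * u₁) := by
      calc t₂ * t₁ * t₂ * u₁ * u₂ * u₁ * t₁
          = t₂ * t₁ * t₂ * (u₁ * u₂ * u₁ * t₁) := by group
        _ = t₂ * t₁ * (u₁ * u₂ * u₁) := by rw [key1]; group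
        _ = t₁⁻¹ * (t₁ * t₂ * t₁) * (u₁ * u₂ * u₁) := by group
        _ = t₁⁻¹ * (t₂ * t₁ * t₂ * u₁ * u₂ * u₁) := by rw [← h1]; group
    rw [show (t₂ * t₁ * t₂ * u₁ * u₂ * u₁) * t₁ * (t₂ * t₁ * t₂ * u₁ * u₂ * u₁)⁻¹
        = (t₂ * t₁ * t₂ * u₁ * u₂ * u₁ * t₁) * (t₂ * t₁ * t₂ * u₁ * u₂ * u₁)⁻¹ by group, this]
    group
  · have : t₂ * t₁ * t₂ * u₁ * u₂ * u₁ * t₂ = t₂⁻¹ * (t₂ * t₁ * t₂ * u₁ * u₂ * u₁) := by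
      calc t₂ * t₁ * t₂ * u₁ * u₂ * u₁ * t₂
          = t₂ * t₁ * t₂ * (u₁ * u₂ * u₁ * t₂) := by group
        _ = t₂ * t₁ * t₂ * t₁⁻¹ * (u₁ * u₂ * u₁) := by rw [key2]; group
        _ = t₁ * t₂ * t₁ * t₁⁻¹ * (u₁ * u₂ * u₁) := by rw [h1]
        _ = t₂⁻¹ * (t₂ * t₁ * t₂ * u₁ * u₂ * u₁) := by group
    rw [show (t₂ * t₁ * t₂ * u₁ * u₂ * u₁) * t₂ * (t₂ * t₁ * t₂ * u₁ * u₂ * u₁)⁻¹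
        = (t₂ * t₁ * t₂ * u₁ * u₂ * u₁ * t₂) * (t₂ * t₁ * t₂ * u₁ * u₂ * u₁)⁻¹ by group, this]
    group
end
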